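/- arXiv:2006.06898 — 4 statements merged into one kernel-verified Lean document; each statement's English description precedes it below -/
import Mathlib

section
/- Let K be a field of characteristic zero, let H = (u, v, h) with u, v, h ∈ K[x,y,z], and suppose the Jacobian matrix JH is nilpotent. Let d be the maximum of the z-degrees of u, v, h, and let u_d, v_d ∈ K[x,y] be the coefficients of z^d in u and v respectively. Then the 2×2 matrix with rows (∂u_d/∂x, ∂u_d/∂y) and (∂v_d/∂x, ∂v_d/∂y) is nilpotent. -/
open MvPolynomial

/-- The Jacobian matrix of a polynomial map `H : Kⁿ → Kⁿ`. -/
noncomputable def jacobian {n : ℕ} {K : Type*} [Field K]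
    (H : Fin n → MvPolynomial (Fin n) K) :
    Matrix (Fin n) (Fin n) (MvPolynomial (Fin n) K) :=
  Matrix.of fun i j => pderiv j (H i)

/-- The coefficient of `z^d` (where `z = X 2`) of a polynomial in `K[x,y,z]`,
viewed as an element of `K[x,y] ⊆ K[x,y,z]`. -/
noncomputable def coeffZ {K : Type*} [Field K] (d : ℕ)
    (p : MvPolynomial (Fin 3) K) : MvPolynomial (Fin 3) K :=
  ∑ m ∈ p.support.filter (fun m => m 2 = d),
    monomial (m - Finsupp.single 2 d) (coeff m p)

section Stmt5Aux

variable {K : Type*} [Field K]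

lemma coeff_pderiv (i : Fin 3) (p : MvPolynomial (Fin 3) K) (m : Fin 3 →₀ ℕ) :
    coeff m (pderiv i p) = (m i + 1) * coeff (m + Finsupp.single i 1) p := by
  induction p using MvPolynomial.induction_on' with
  | monomial s a =>
    rw [pderiv_monomial, coeff_monomial, coeff_monomial]
    by_cases h : s = m + Finsupp.single i 1
    · have hs : s - Finsupp.single i 1 = m := by rw [h]; exact add_tsub_cancel_right _ _
      have hsi : s i = m i + 1 := by
        rw [h]; simp [Finsupp.add_apply, Finsupp.single_eq_same]
      rw [if_pos hs, if_pos h, hsi]; push_cast; ring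
    · rw [if_neg h]
      rcases Nat.eq_zero_or_pos (s i) with h0 | h0
      · simp [h0]
      · have hne : s - Finsupp.single i 1 ≠ m := by
          intro hh
          apply h
          rw [← hh, tsub_add_cancel_of_le]
          exact Finsupp.single_le_iff.mpr h0
        rw [if_neg hne]; ring
  | add p q hp hq =>
    simp [map_add, coeff_add, hp, hq, mul_add]

lemma coeff_coeffZ (d : ℕ) (p : MvPolynomial (Fin 3) K) (m : Fin 3 →₀ ℕ) :
    coeff m (coeffZ d p) = if m 2 = 0 then coeff (m + Finsupp.single 2 d) p else 0 := by
  unfold coeffZ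
  rw [coeff_sum]
  simp only [coeff_monomial]
  split_ifs with hm
  · have key : ∀ n ∈ p.support.filter (fun n => n 2 = d),
        (if n - Finsupp.single 2 d = m then coeff n p else 0)
          = if n = m + Finsupp.single 2 d then coeff n p else 0 := by
      intro n hn
      rw [Finset.mem_filter] at hn
      congr 1
      apply propext
      constructor
      · intro hh
        rw [← hh, tsub_add_cancel_of_le (Finsupp.single_le_iff.mpr (by omega))]
      · intro hh
        rw [hh, add_tsub_cancel_right]
    rw [Finset.sum_congr rfl key, Finset.sum_ite_eq' _ (m + Finsupp.single 2 d)]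
    split_ifs with hmem
    · rfl
    · by_contra hc
      apply hmem
      rw [Finset.mem_filter]
      refine ⟨mem_support_iff.mpr fun hz => hc (by rw [hz]), ?_⟩
      simp [Finsupp.add_apply, Finsupp.single_eq_same, hm]
  · apply Finset.sum_eq_zero
    intro n hn
    rw [Finset.mem_filter] at hn
    rw [if_neg]
    intro hh
    apply hm
    rw [← hh]
    simp [Finsupp.tsub_apply, Finsupp.single_eq_same, hn.2]

lemma coeffZ_pderiv (d : ℕ) (i : Fin 3) (hi : i ≠ 2) (p : MvPolynomial (Fin 3) K) :
    pderiv i (coeffZ d p) = coeffZ d (pderiv i p) := by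
  apply MvPolynomial.ext; intro m
  rw [_root_.coeff_pderiv, coeff_coeffZ, coeff_coeffZ]
  have h2 : ((m + Finsupp.single i 1 : Fin 3 →₀ ℕ)) 2 = m 2 := by
    rw [Finsupp.add_apply, Finsupp.single_apply, if_neg hi, add_zero]
  rw [h2]
  split_ifs with h
  · rw [_root_.coeff_pderiv]
    have hmi : ((m + Finsupp.single 2 d : Fin 3 →₀ ℕ)) i = m i := by
      rw [Finsupp.add_apply, Finsupp.single_apply, if_neg (Ne.symm hi), add_zero]
    rw [hmi, add_right_comm]
  · ring

lemma coeffZ_add (d : ℕ) (p q : MvPolynomial (Fin 3) K) :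
    coeffZ d (p + q) = coeffZ d p + coeffZ d q := by
  apply MvPolynomial.ext; intro m
  simp only [coeff_add, coeff_coeffZ]
  split_ifs <;> simp

lemma coeffZ_neg (d : ℕ) (p : MvPolynomial (Fin 3) K) :
    coeffZ d (-p) = -coeffZ d p := by
  apply MvPolynomial.ext; intro m
  simp only [coeff_neg, coeff_coeffZ]
  split_ifs <;> simp

lemma coeffZ_sub (d : ℕ) (p q : MvPolynomial (Fin 3) K) :
    coeffZ d (p - q) = coeffZ d p - coeffZ d q := by
  rw [sub_eq_add_neg, sub_eq_add_neg, coeffZ_add, coeffZ_neg]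

lemma coeffZ_eq_zero {d : ℕ} {p : MvPolynomial (Fin 3) K}
    (h : ∀ m : Fin 3 →₀ ℕ, d ≤ m 2 → coeff m p = 0) : coeffZ d p = 0 := by
  apply MvPolynomial.ext; intro m
  rw [coeff_coeffZ]
  split_ifs with hm
  · rw [h, coeff_zero]
    simp [Finsupp.add_apply, Finsupp.single_eq_same]
  · simp

lemma below_of_degreeOf_le {p : MvPolynomial (Fin 3) K} {d : ℕ} (h : degreeOf 2 p ≤ d) :
    ∀ m : Fin 3 →₀ ℕ, d + 1 ≤ m 2 → coeff m p = 0 := by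
  intro m hm
  by_contra hc
  have := (degreeOf_le_iff.mp h) m (mem_support_iff.mpr hc)
  omega

lemma below_pderiv {i : Fin 3} (hi : i ≠ 2) {p : MvPolynomial (Fin 3) K} {k : ℕ}
    (h : ∀ m : Fin 3 →₀ ℕ, k ≤ m 2 → coeff m p = 0) :
    ∀ m : Fin 3 →₀ ℕ, k ≤ m 2 → coeff m (pderiv i p) = 0 := by
  intro m hm
  rw [_root_.coeff_pderiv, h, mul_zero]
  rw [Finsupp.add_apply, Finsupp.single_apply, if_neg hi, add_zero]
  exact hm

lemma below_pderiv2 {p : MvPolynomial (Fin 3) K} {k : ℕ}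
    (h : ∀ m : Fin 3 →₀ ℕ, k + 1 ≤ m 2 → coeff m p = 0) :
    ∀ m : Fin 3 →₀ ℕ, k ≤ m 2 → coeff m (pderiv 2 p) = 0 := by
  intro m hm
  rw [_root_.coeff_pderiv, h, mul_zero]
  simp only [Finsupp.add_apply, Finsupp.single_eq_same]
  omega

lemma below_mul {p q : MvPolynomial (Fin 3) K} {k l : ℕ}
    (hp : ∀ m : Fin 3 →₀ ℕ, k ≤ m 2 → coeff m p = 0)
    (hq : ∀ m : Fin 3 →₀ ℕ, l ≤ m 2 → coeff m q = 0) :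
    ∀ m : Fin 3 →₀ ℕ, k + l ≤ m 2 + 1 → coeff m (p * q) = 0 := by
  intro m hm
  rw [coeff_mul]
  apply Finset.sum_eq_zero
  rintro ⟨x, y⟩ hxy
  rw [Finset.HasAntidiagonal.mem_antidiagonal] at hxy
  have hsum : x 2 + y 2 = m 2 := by rw [← hxy]; simp [Finsupp.add_apply]
  by_cases hx : k ≤ x 2
  · simp [hp x hx]
  · have : l ≤ y 2 := by omega
    simp [hq y this]

lemma coeffZ_mul {d e : ℕ} {p q : MvPolynomial (Fin 3) K}
    (hp : ∀ m : Fin 3 →₀ ℕ, d + 1 ≤ m 2 → coeff m p = 0)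
    (hq : ∀ m : Fin 3 →₀ ℕ, e + 1 ≤ m 2 → coeff m q = 0) :
    coeffZ (d + e) (p * q) = coeffZ d p * coeffZ e q := by
  apply MvPolynomial.ext; intro m
  rw [coeff_coeffZ, coeff_mul]
  split_ifs with hm
  · -- m 2 = 0
    rw [coeff_mul]
    have key : ∀ a b : Fin 3 →₀ ℕ, a + b = m + Finsupp.single 2 (d + e) →
        a 2 + b 2 = m 2 + (d + e) := by
      intro a b hab
      have h := congrArg (fun f : Fin 3 →₀ ℕ => f 2) hab
      simpa [Finsupp.add_apply, Finsupp.single_eq_same] using h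
    have hR : ∀ xy ∈ Finset.HasAntidiagonal.antidiagonal m,
        coeff xy.1 (coeffZ d p) * coeff xy.2 (coeffZ e q)
          = coeff (xy.1 + Finsupp.single 2 d) p * coeff (xy.2 + Finsupp.single 2 e) q := by
      rintro ⟨x, y⟩ hxy
      rw [Finset.HasAntidiagonal.mem_antidiagonal] at hxy
      have hx2 : x 2 + y 2 = m 2 := by rw [← hxy]; rfl
      rw [coeff_coeffZ, coeff_coeffZ, if_pos (by omega : x 2 = 0), if_pos (by omega : y 2 = 0)]
    rw [Finset.sum_congr rfl hR]
    have hfil : ∀ ab ∈ Finset.HasAntidiagonal.antidiagonal (m + Finsupp.single 2 (d + e)),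
        coeff ab.1 p * coeff ab.2 q ≠ 0 → ab.1 2 = d := by
      rintro ⟨a, b⟩ hab hne
      dsimp only at hab hne ⊢
      rw [Finset.HasAntidiagonal.mem_antidiagonal] at hab
      have hsum := key a b hab
      by_contra hne2
      rcases Nat.lt_or_ge (a 2) d with hlt | hge
      · exact hne (by rw [hq b (by omega), mul_zero])
      · exact hne (by rw [hp a (by omega), zero_mul])
    rw [← Finset.sum_filter_of_ne hfil]
    refine Finset.sum_nbij' (fun ab => (ab.1 - Finsupp.single 2 d, ab.2 - Finsupp.single 2 e))
      (fun xy => (xy.1 + Finsupp.single 2 d, xy.2 + Finsupp.single 2 e)) ?_ ?_ ?_ ?_ ?_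
    · -- maps filter → antidiagonal m
      rintro ⟨a, b⟩ hab
      simp only [Finset.mem_filter, Finset.HasAntidiagonal.mem_antidiagonal] at hab ⊢
      obtain ⟨hab, ha2⟩ := hab
      have hsum := key a b hab
      rw [tsub_add_tsub_comm (Finsupp.single_le_iff.mpr (by omega))
        (Finsupp.single_le_iff.mpr (by omega)), hab, ← Finsupp.single_add,
        add_tsub_cancel_right]
    · -- maps antidiagonal m → filter
      rintro ⟨x, y⟩ hxy
      simp only [Finset.HasAntidiagonal.mem_antidiagonal] at hxy
      simp only [Finset.mem_filter, Finset.HasAntidiagonal.mem_antidiagonal]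
      have hx2 : x 2 + y 2 = m 2 := by rw [← hxy]; rfl
      constructor
      · rw [add_add_add_comm, hxy, Finsupp.single_add]
      · simp only [Finsupp.add_apply, Finsupp.single_eq_same]
        omega
    · -- left inverse
      rintro ⟨a, b⟩ hab
      simp only [Finset.mem_filter, Finset.HasAntidiagonal.mem_antidiagonal] at hab
      obtain ⟨hab, ha2⟩ := hab
      have hsum := key a b hab
      simp only [Prod.mk.injEq]
      exact ⟨tsub_add_cancel_of_le (Finsupp.single_le_iff.mpr (by omega)),
        tsub_add_cancel_of_le (Finsupp.single_le_iff.mpr (by omega))⟩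
    · -- right inverse
      rintro ⟨x, y⟩ _
      simp only [Prod.mk.injEq]
      exact ⟨add_tsub_cancel_right _ _, add_tsub_cancel_right _ _⟩
    · -- values agree
      rintro ⟨a, b⟩ hab
      simp only [Finset.mem_filter, Finset.HasAntidiagonal.mem_antidiagonal] at hab
      obtain ⟨hab, ha2⟩ := hab
      have hsum := key a b hab
      simp only
      rw [tsub_add_cancel_of_le (Finsupp.single_le_iff.mpr (by omega)),
        tsub_add_cancel_of_le (Finsupp.single_le_iff.mpr (by omega))]
  · -- m 2 ≠ 0
    symm
    rw [coeff_mul]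
    apply Finset.sum_eq_zero
    rintro ⟨x, y⟩ hxy
    rw [Finset.HasAntidiagonal.mem_antidiagonal] at hxy
    have hx2 : x 2 + y 2 = m 2 := by rw [← hxy]; rfl
    rcases Nat.eq_zero_or_pos (x 2) with h0 | h0
    · rw [coeff_coeffZ e q y, if_neg (by omega), mul_zero]
    · rw [coeff_coeffZ d p x, if_neg (by omega), zero_mul]

end Stmt5Aux

lemma nilpotent_two_of (R : Type*) [CommRing R] (a b c d : R)
    (h1 : a + d = 0) (h2 : a * d - b * c = 0) :
    IsNilpotent (Matrix.of ![![a, b], ![c, d]]) := by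
  refine ⟨2, ?_⟩
  ext i j
  fin_cases i <;> fin_cases j <;>
      simp only [pow_two, Matrix.mul_apply, Fin.sum_univ_two, Matrix.of_apply,
        Matrix.cons_val', Matrix.cons_val_zero, Matrix.cons_val_one, Matrix.head_cons,
        Matrix.empty_val', Matrix.cons_val_fin_one, Matrix.zero_apply, Fin.mk_zero, Fin.mk_one,
        Matrix.vecHead, Matrix.vecTail]
  · linear_combination a * h1 - h2
  · linear_combination b * h1
  · linear_combination c * h1
  · linear_combination d * h1 - h2

/-- Let `H = (u, v, h)` have nilpotent Jacobian, let `d` be the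
maximum of the `z`-degrees of `u, v, h` and let `u_d, v_d` be the coefficients
of `z^d` in `u` and `v`.  Then the `2×2` matrix `((u_d)_x, (u_d)_y; (v_d)_x, (v_d)_y)`
is nilpotent.  Variables: `x = X 0`, `y = X 1`, `z = X 2`. -/
theorem stmt5 (K : Type*) [Field K] [CharZero K]
    (u v h : MvPolynomial (Fin 3) K) (d : ℕ)
    (hd : d = max (max (degreeOf 2 u) (degreeOf 2 v)) (degreeOf 2 h))
    (hnil : IsNilpotent (jacobian ![u, v, h])) :
    IsNilpotent
      (Matrix.of ![![pderiv 0 (coeffZ d u), pderiv 1 (coeffZ d u)],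
                    ![pderiv 0 (coeffZ d v), pderiv 1 (coeffZ d v)]]) := by
  have hdu : degreeOf 2 u ≤ d := by omega
  have hdv : degreeOf 2 v ≤ d := by omega
  have hdh : degreeOf 2 h ≤ d := by omega
  have hu' := below_of_degreeOf_le hdu
  have hv' := below_of_degreeOf_le hdv
  have hh' := below_of_degreeOf_le hdh
  have hA : jacobian ![u, v, h] =
      Matrix.of ![![pderiv 0 u, pderiv 1 u, pderiv 2 u],
                  ![pderiv 0 v, pderiv 1 v, pderiv 2 v],
                  ![pderiv 0 h, pderiv 1 h, pderiv 2 h]] := by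
    ext i j
    fin_cases i <;> fin_cases j <;> rfl
  have h1 := (Matrix.isNilpotent_trace_of_isNilpotent hnil).eq_zero
  have hnil2 : IsNilpotent (jacobian ![u, v, h] * jacobian ![u, v, h]) := by
    obtain ⟨k, hk⟩ := hnil
    exact ⟨k, by rw [← pow_two, ← pow_mul, mul_comm 2 k, pow_mul, hk, zero_pow two_ne_zero]⟩
  have h2 := (Matrix.isNilpotent_trace_of_isNilpotent hnil2).eq_zero
  rw [hA] at h1 h2
  simp only [Matrix.trace_fin_three, Matrix.mul_apply, Fin.sum_univ_three, Matrix.of_apply,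
    Matrix.cons_val', Matrix.cons_val_zero, Matrix.cons_val_one, Matrix.head_cons,
    Matrix.empty_val', Matrix.cons_val_fin_one, Matrix.cons_val_two, Matrix.tail_cons,
    Matrix.head_fin_const] at h1 h2
  have hT : pderiv 0 u + pderiv 1 v + pderiv 2 h = 0 := h1
  have h3 : (2 : MvPolynomial (Fin 3) K) *
      ((pderiv 0 u * pderiv 1 v - pderiv 1 u * pderiv 0 v) +
       (pderiv 0 u * pderiv 2 h - pderiv 2 u * pderiv 0 h) +
       (pderiv 1 v * pderiv 2 h - pderiv 2 v * pderiv 1 h)) = 0 := by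
    linear_combination (pderiv 0 u + pderiv 1 v + pderiv 2 h) * h1 - h2
  have hσ := (mul_eq_zero.mp h3).resolve_left (by norm_num : (2 : MvPolynomial (Fin 3) K) ≠ 0)
  have hTr : pderiv 0 (coeffZ d u) + pderiv 1 (coeffZ d v) = 0 := by
    rw [coeffZ_pderiv d 0 (by decide) u, coeffZ_pderiv d 1 (by decide) v, ← coeffZ_add]
    have hrw : pderiv 0 u + pderiv 1 v = -pderiv 2 h := by linear_combination hT
    rw [hrw, coeffZ_neg, coeffZ_eq_zero (below_pderiv2 hh'), neg_zero]
  have hDet : pderiv 0 (coeffZ d u) * pderiv 1 (coeffZ d v)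
      - pderiv 1 (coeffZ d u) * pderiv 0 (coeffZ d v) = 0 := by
    rw [coeffZ_pderiv d 0 (by decide) u, coeffZ_pderiv d 1 (by decide) v,
      coeffZ_pderiv d 1 (by decide) u, coeffZ_pderiv d 0 (by decide) v,
      ← coeffZ_mul (below_pderiv (by decide) hu') (below_pderiv (by decide) hv'),
      ← coeffZ_mul (below_pderiv (by decide) hu') (below_pderiv (by decide) hv'),
      ← coeffZ_sub]
    have hrw : pderiv 0 u * pderiv 1 v - pderiv 1 u * pderiv 0 v
        = pderiv 2 u * pderiv 0 h - pderiv 0 u * pderiv 2 h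
          + (pderiv 2 v * pderiv 1 h - pderiv 1 v * pderiv 2 h) := by
      linear_combination hσ
    rw [hrw]
    have z1 : coeffZ (d + d) (pderiv 2 u * pderiv 0 h) = 0 :=
      coeffZ_eq_zero (fun m hm =>
        below_mul (below_pderiv2 hu') (below_pderiv (by decide) hh') m (by omega))
    have z2 : coeffZ (d + d) (pderiv 0 u * pderiv 2 h) = 0 :=
      coeffZ_eq_zero (fun m hm =>
        below_mul (below_pderiv (by decide) hu') (below_pderiv2 hh') m (by omega))
    have z3 : coeffZ (d + d) (pderiv 2 v * pderiv 1 h) = 0 :=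
      coeffZ_eq_zero (fun m hm =>
        below_mul (below_pderiv2 hv') (below_pderiv (by decide) hh') m (by omega))
    have z4 : coeffZ (d + d) (pderiv 1 v * pderiv 2 h) = 0 :=
      coeffZ_eq_zero (fun m hm =>
        below_mul (below_pderiv (by decide) hv') (below_pderiv2 hh') m (by omega))
    rw [coeffZ_add, coeffZ_sub, coeffZ_sub, z1, z2, z3, z4]
    ring
  exact nilpotent_two_of _ _ _ _ _ hTr hDet
end

section
/- Let K be a field of characteristic zero, let n ≥ 3, and let H be a polynomial map of the form H = (H_1(x_1,...,x_n), H_2(x_1,...,x_n), H_3(x_1,x_2), ..., H_n(x_1,x_2)) where H_2 = b_3 x_3 + ··· + b_n x_n + H_2^{(0)}(x_1,x_2) with b_3,...,b_n ∈ K and H_2^{(0)} ∈ K[x_1,x_2]. Write h_2 = b_3 H_3 + ··· + b_n H_n. If the Jacobian matrix JH is nilpotent, then the following four identities hold (subscripts denote partial derivatives): (i) H_{1x_1} + H_{2x_2} = 0; (ii) (H_{2x_2})^2 + H_{1x_2}H_{2x_1} + H_{1x_3}H_{3x_1} + ··· + H_{1x_n}H_{nx_1} + h_{2x_2} = 0;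 (iii) Σ_{i=3}^{n} H_{1x_i}(H_{2x_1}H_{ix_2} − H_{2x_2}H_{ix_1}) − (H_{1x_1}h_{2x_2} − H_{1x_2}h_{2x_1}) = 0; (iv) Σ_{i=3}^{n} H_{1x_i}(H_{ix_1}h_{2x_2} − H_{ix_2}h_{2x_1}) = 0. -/
open MvPolynomial

lemma stmt9_mulVecPow {R : Type*} [CommSemiring R] {p q : Type*} [Fintype p] [Fintype q]
    [DecidableEq p] [DecidableEq q]
    (U : Matrix p q R) (V : Matrix q p R) (m : ℕ) :
    (V * U) ^ (m + 1) = V * (U * V) ^ m * U := by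
  induction m with
  | zero => simp
  | succ m ih =>
    rw [pow_succ, ih, pow_succ]
    simp only [Matrix.mul_assoc]

lemma stmt9_nat_cancel {R : Type*} [CommRing R] [IsDomain R] [CharZero R] (k : ℕ) (hk : k ≠ 0)
    {x : R} (h : (k : R) * x = 0) : x = 0 := by
  rcases mul_eq_zero.mp h with h | h
  · exact absurd (Nat.cast_eq_zero.mp h) hk
  · exact h

lemma stmt9_key {R : Type*} [CommRing R] [IsDomain R] [CharZero R]
    (a0 a1 S T u v P Q : R)
    (hM : IsNilpotent (!![a0,a1,S,T; u,v,P,Q; 1,0,0,0; 0,1,0,0] : Matrix (Fin 4) (Fin 4) R)) :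
    a0 + v = 0 ∧ v ^ 2 + a1 * u + S + Q = 0 ∧
      a1 * P - v * S - a0 * Q + u * T = 0 ∧ S * Q - T * P = 0 := by
  set M : Matrix (Fin 4) (Fin 4) R := !![a0,a1,S,T; u,v,P,Q; 1,0,0,0; 0,1,0,0] with hMdef
  have hpow : ∀ k : ℕ, IsNilpotent (M ^ (k + 1)) := by
    intro k
    obtain ⟨m, hm⟩ := hM
    exact ⟨m, by rw [← pow_mul, Nat.mul_comm, pow_mul, hm, zero_pow k.succ_ne_zero]⟩
  have htr : ∀ k : ℕ, Matrix.trace (M ^ (k + 1)) = 0 := fun k =>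
    (Matrix.isNilpotent_trace_of_isNilpotent (hpow k)).eq_zero
  have t1 := htr 0
  have t2 := htr 1
  have t3 := htr 2
  have t4 := htr 3
  rw [zero_add, pow_one] at t1
  rw [pow_succ, pow_one] at t2
  rw [pow_succ, pow_succ, pow_one] at t3
  rw [pow_succ, pow_succ, pow_succ, pow_one] at t4
  simp only [Matrix.trace, Matrix.mul_apply, Fin.sum_univ_four,
    Matrix.diag, hMdef, Matrix.cons_val', Matrix.cons_val_zero, Matrix.cons_val_one,
    Matrix.head_cons, Matrix.empty_val', Matrix.cons_val_fin_one, Matrix.head_fin_const,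
    Matrix.cons_val_two, Matrix.cons_val_three, Matrix.tail_cons, Matrix.of_apply] at t1 t2 t3 t4
  have ha0 : a0 = -v := by linear_combination t1
  subst ha0
  refine ⟨by ring, ?_, ?_, ?_⟩
  · refine stmt9_nat_cancel 2 (by norm_num) ?_
    linear_combination t2
  · refine stmt9_nat_cancel 3 (by norm_num) ?_
    linear_combination t3
  · refine stmt9_nat_cancel 8 (by norm_num) ?_
    linear_combination (2*Q + v^2 + 2*S + 2*a1*u + (-v)^2) * t2 - 2 * t4

lemma stmt9_pderiv_eq_zero {σ : Type*} [DecidableEq σ] {K : Type*} [CommSemiring K]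
    {j : σ} {p : MvPolynomial σ K} (h : degreeOf j p = 0) : pderiv j p = 0 := by
  apply pderiv_eq_zero_of_notMem_vars
  rw [mem_vars]
  rintro ⟨d, hd, hjd⟩
  have h1 := monomial_le_degreeOf j hd
  rw [h, Nat.le_zero] at h1
  rw [Finsupp.mem_support_iff] at hjd
  exact hjd h1

set_option maxHeartbeats 1600000 in
/-- (Lemma 3.1.)  Here the dimension is `n + 3` (so `n ≥ 3` in
the notation of the paper), the components of `H` are indexed by `Fin (n+3)`
(`H 0 = H_1`, `H 1 = H_2`, and `H i = H_{i+1}` for `i ≥ 2`), and the variables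
`x_1, x_2, x_3, …` are `X 0, X 1, X 2, …`.  The components `H i` for `i ≥ 2`
depend only on `x_1, x_2`; `H 1 = b_3 x_3 + ⋯ + b_n x_n + H_2⁽⁰⁾(x_1,x_2)`;
`h_2 = b_3 H_3 + ⋯ + b_n H_n`.  If `JH` is nilpotent, then the four stated
identities hold. -/
theorem stmt9 (K : Type*) [Field K] [CharZero K] (n : ℕ)
    (H : Fin (n + 3) → MvPolynomial (Fin (n + 3)) K)
    (hHtail : ∀ i : Fin (n + 3), 2 ≤ (i : ℕ) →
      ∀ j : Fin (n + 3), 2 ≤ (j : ℕ) → degreeOf j (H i) = 0)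
    (b : Fin (n + 3) → K) (H20 : MvPolynomial (Fin (n + 3)) K)
    (hH20 : ∀ j : Fin (n + 3), 2 ≤ (j : ℕ) → degreeOf j H20 = 0)
    (hH2 : H 1 = (∑ j ∈ Finset.univ.filter (fun j : Fin (n + 3) => 2 ≤ (j : ℕ)),
      C (b j) * X j) + H20)
    (h2 : MvPolynomial (Fin (n + 3)) K)
    (hh2 : h2 = ∑ j ∈ Finset.univ.filter (fun j : Fin (n + 3) => 2 ≤ (j : ℕ)),
      C (b j) * H j)
    (hnil : IsNilpotent (jacobian H)) :
    pderiv 0 (H 0) + pderiv 1 (H 1) = 0 ∧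
    (pderiv 1 (H 1)) ^ 2 + pderiv 1 (H 0) * pderiv 0 (H 1) +
      (∑ i ∈ Finset.univ.filter (fun i : Fin (n + 3) => 2 ≤ (i : ℕ)),
        pderiv i (H 0) * pderiv 0 (H i)) + pderiv 1 h2 = 0 ∧
    (∑ i ∈ Finset.univ.filter (fun i : Fin (n + 3) => 2 ≤ (i : ℕ)),
        pderiv i (H 0) * (pderiv 0 (H 1) * pderiv 1 (H i)
          - pderiv 1 (H 1) * pderiv 0 (H i)))
      - (pderiv 0 (H 0) * pderiv 1 h2 - pderiv 1 (H 0) * pderiv 0 h2) = 0 ∧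
    (∑ i ∈ Finset.univ.filter (fun i : Fin (n + 3) => 2 ≤ (i : ℕ)),
        pderiv i (H 0) * (pderiv 0 (H i) * pderiv 1 h2
          - pderiv 1 (H i) * pderiv 0 h2)) = 0 := by
  classical
  set F : Finset (Fin (n + 3)) := Finset.univ.filter (fun j : Fin (n + 3) => 2 ≤ (j : ℕ))
    with hF
  -- index facts
  have hv0 : ((0 : Fin (n + 3)) : ℕ) = 0 := Fin.val_zero _
  have hv1 : ((1 : Fin (n + 3)) : ℕ) = 1 := Fin.val_one _
  have h10 : (1 : Fin (n + 3)) ≠ 0 := by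
    intro h
    have := congrArg Fin.val h
    rw [hv0, hv1] at this
    exact one_ne_zero this
  have tri : ∀ i : Fin (n + 3), i = 0 ∨ i = 1 ∨ 2 ≤ (i : ℕ) := by
    intro i
    rcases Nat.lt_or_ge (i : ℕ) 2 with h | h
    · have h01 : (i : ℕ) = 0 ∨ (i : ℕ) = 1 := by omega
      rcases h01 with h0 | h1
      · exact Or.inl (Fin.ext (by rw [hv0, h0]))
      · exact Or.inr (Or.inl (Fin.ext (by rw [hv1, h1])))
    · exact Or.inr (Or.inr h)
  have h20 : ¬ (2 : ℕ) ≤ ((0 : Fin (n + 3)) : ℕ) := by rw [hv0]; omega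
  have h21 : ¬ (2 : ℕ) ≤ ((1 : Fin (n + 3)) : ℕ) := by rw [hv1]; omega
  -- derivative facts
  have hfact0 : ∀ i j : Fin (n + 3), 2 ≤ (i : ℕ) → 2 ≤ (j : ℕ) → pderiv j (H i) = 0 :=
    fun i j hi hj => stmt9_pderiv_eq_zero (hHtail i hi j hj)
  have hb : ∀ j : Fin (n + 3), 2 ≤ (j : ℕ) → pderiv j (H 1) = C (b j) := by
    intro j hj
    rw [hH2, map_add, stmt9_pderiv_eq_zero (hH20 j hj), add_zero, map_sum]
    rw [Finset.sum_eq_single_of_mem j (by simp [hF, hj])]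
    · rw [pderiv_C_mul, pderiv_X_self, mul_one]
    · intro k _ hk
      rw [pderiv_C_mul, pderiv_X_of_ne hk, mul_zero]
  have hP : pderiv 0 h2 = ∑ j ∈ F, C (b j) * pderiv 0 (H j) := by
    rw [hh2, map_sum]
    exact Finset.sum_congr rfl fun j _ => pderiv_C_mul
  have hQ : pderiv 1 h2 = ∑ j ∈ F, C (b j) * pderiv 1 (H j) := by
    rw [hh2, map_sum]
    exact Finset.sum_congr rfl fun j _ => pderiv_C_mul
  -- the factorization JH = U * V
  set U : Matrix (Fin (n + 3)) (Fin 4) (MvPolynomial (Fin (n + 3)) K) :=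
    Matrix.of fun i k =>
    ![(if i = 0 then 1 else 0), (if i = 1 then 1 else 0),
      (if 2 ≤ (i : ℕ) then pderiv 0 (H i) else 0),
      (if 2 ≤ (i : ℕ) then pderiv 1 (H i) else 0)] k with hU
  set V : Matrix (Fin 4) (Fin (n + 3)) (MvPolynomial (Fin (n + 3)) K) :=
    Matrix.of fun k j =>
    ![pderiv j (H 0), pderiv j (H 1),
      (if j = 0 then 1 else 0), (if j = 1 then 1 else 0)] k with hV
  have hA : jacobian H = U * V := by
    refine Matrix.ext fun i j => ?_
    rw [Matrix.mul_apply, Fin.sum_univ_four]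
    simp only [hU, hV, Matrix.of_apply, Matrix.cons_val_zero, Matrix.cons_val_one,
      Matrix.head_cons, Matrix.cons_val_two, Matrix.cons_val_three, Matrix.tail_cons]
    rcases tri i with hi | hi | hi
    · subst hi
      simp [jacobian, h10.symm, h20]
    · subst hi
      simp [jacobian, h10, h21]
    · have hi0 : i ≠ 0 := by intro h; rw [h, hv0] at hi; omega
      have hi1 : i ≠ 1 := by intro h; rw [h, hv1] at hi; omega
      rcases tri j with hj | hj | hj
      · subst hj; simp [jacobian, hi0, hi1, hi, h10.symm]
      · subst hj; simp [jacobian, hi0, hi1, hi, h10]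
      · have hj0 : j ≠ 0 := by intro h; rw [h, hv0] at hj; omega
        have hj1 : j ≠ 1 := by intro h; rw [h, hv1] at hj; omega
        simp [jacobian, hi0, hi1, hi, hj0, hj1, hfact0 i j hi hj]
  -- the condensed matrix
  have hMeq : V * U = !![pderiv 0 (H 0), pderiv 1 (H 0),
      (∑ i ∈ F, pderiv i (H 0) * pderiv 0 (H i)),
      (∑ i ∈ F, pderiv i (H 0) * pderiv 1 (H i));
      pderiv 0 (H 1), pderiv 1 (H 1), pderiv 0 h2, pderiv 1 h2;
      1, 0, 0, 0; 0, 1, 0, 0] := by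
    have e00 : (V * U) 0 0 = pderiv 0 (H 0) := by
      rw [Matrix.mul_apply]
      simp only [hU, hV, Matrix.of_apply, Matrix.cons_val_zero, Matrix.cons_val_one,
          Matrix.head_cons, Matrix.cons_val_two, Matrix.cons_val_three, Matrix.tail_cons,
          mul_ite, mul_one, mul_zero, ite_mul, one_mul, zero_mul]
      first
      | simp [Finset.sum_ite_eq', h10, h10.symm, h20, h21]
      | (refine Finset.sum_eq_zero fun i _ => ?_
         rcases tri i with hi | hi | hi
         · subst hi; simp [h10.symm, h20]
         · subst hi; simp [h10, h21]
         · have hi0 : i ≠ 0 := by intro h; rw [h, hv0] at hi; omega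
           have hi1 : i ≠ 1 := by intro h; rw [h, hv1] at hi; omega
           simp [hi0, hi1, hi])
    have e01 : (V * U) 0 1 = pderiv 1 (H 0) := by
      rw [Matrix.mul_apply]
      simp only [hU, hV, Matrix.of_apply, Matrix.cons_val_zero, Matrix.cons_val_one,
          Matrix.head_cons, Matrix.cons_val_two, Matrix.cons_val_three, Matrix.tail_cons,
          mul_ite, mul_one, mul_zero, ite_mul, one_mul, zero_mul]
      first
      | simp [Finset.sum_ite_eq', h10, h10.symm, h20, h21]
      | (refine Finset.sum_eq_zero fun i _ => ?_
         rcases tri i with hi | hi | hi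
         · subst hi; simp [h10.symm, h20]
         · subst hi; simp [h10, h21]
         · have hi0 : i ≠ 0 := by intro h; rw [h, hv0] at hi; omega
           have hi1 : i ≠ 1 := by intro h; rw [h, hv1] at hi; omega
           simp [hi0, hi1, hi])
    have e02 : (V * U) 0 2 = ∑ i ∈ F, pderiv i (H 0) * pderiv 0 (H i) := by
      rw [Matrix.mul_apply]
      simp only [hU, hV, Matrix.of_apply, Matrix.cons_val_zero, Matrix.cons_val_one,
          Matrix.head_cons, Matrix.cons_val_two, Matrix.cons_val_three, Matrix.tail_cons,
          mul_ite, mul_one, mul_zero, ite_mul, one_mul, zero_mul]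
      rw [hF, Finset.sum_filter]
    have e03 : (V * U) 0 3 = ∑ i ∈ F, pderiv i (H 0) * pderiv 1 (H i) := by
      rw [Matrix.mul_apply]
      simp only [hU, hV, Matrix.of_apply, Matrix.cons_val_zero, Matrix.cons_val_one,
          Matrix.head_cons, Matrix.cons_val_two, Matrix.cons_val_three, Matrix.tail_cons,
          mul_ite, mul_one, mul_zero, ite_mul, one_mul, zero_mul]
      rw [hF, Finset.sum_filter]
    have e10 : (V * U) 1 0 = pderiv 0 (H 1) := by
      rw [Matrix.mul_apply]
      simp only [hU, hV, Matrix.of_apply, Matrix.cons_val_zero, Matrix.cons_val_one,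
          Matrix.head_cons, Matrix.cons_val_two, Matrix.cons_val_three, Matrix.tail_cons,
          mul_ite, mul_one, mul_zero, ite_mul, one_mul, zero_mul]
      first
      | simp [Finset.sum_ite_eq', h10, h10.symm, h20, h21]
      | (refine Finset.sum_eq_zero fun i _ => ?_
         rcases tri i with hi | hi | hi
         · subst hi; simp [h10.symm, h20]
         · subst hi; simp [h10, h21]
         · have hi0 : i ≠ 0 := by intro h; rw [h, hv0] at hi; omega
           have hi1 : i ≠ 1 := by intro h; rw [h, hv1] at hi; omega
           simp [hi0, hi1, hi])
    have e11 : (V * U) 1 1 = pderiv 1 (H 1) := by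
      rw [Matrix.mul_apply]
      simp only [hU, hV, Matrix.of_apply, Matrix.cons_val_zero, Matrix.cons_val_one,
          Matrix.head_cons, Matrix.cons_val_two, Matrix.cons_val_three, Matrix.tail_cons,
          mul_ite, mul_one, mul_zero, ite_mul, one_mul, zero_mul]
      first
      | simp [Finset.sum_ite_eq', h10, h10.symm, h20, h21]
      | (refine Finset.sum_eq_zero fun i _ => ?_
         rcases tri i with hi | hi | hi
         · subst hi; simp [h10.symm, h20]
         · subst hi; simp [h10, h21]
         · have hi0 : i ≠ 0 := by intro h; rw [h, hv0] at hi; omega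
           have hi1 : i ≠ 1 := by intro h; rw [h, hv1] at hi; omega
           simp [hi0, hi1, hi])
    have e12 : (V * U) 1 2 = pderiv 0 h2 := by
      rw [Matrix.mul_apply]
      simp only [hU, hV, Matrix.of_apply, Matrix.cons_val_zero, Matrix.cons_val_one,
          Matrix.head_cons, Matrix.cons_val_two, Matrix.cons_val_three, Matrix.tail_cons,
          mul_ite, mul_one, mul_zero, ite_mul, one_mul, zero_mul]
      rw [hP, hF, Finset.sum_filter]
      refine Finset.sum_congr rfl fun i _ => ?_
      by_cases hi : 2 ≤ (i : ℕ)
      · rw [if_pos hi, if_pos hi, hb i hi]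
      · rw [if_neg hi, if_neg hi]
    have e13 : (V * U) 1 3 = pderiv 1 h2 := by
      rw [Matrix.mul_apply]
      simp only [hU, hV, Matrix.of_apply, Matrix.cons_val_zero, Matrix.cons_val_one,
          Matrix.head_cons, Matrix.cons_val_two, Matrix.cons_val_three, Matrix.tail_cons,
          mul_ite, mul_one, mul_zero, ite_mul, one_mul, zero_mul]
      rw [hQ, hF, Finset.sum_filter]
      refine Finset.sum_congr rfl fun i _ => ?_
      by_cases hi : 2 ≤ (i : ℕ)
      · rw [if_pos hi, if_pos hi, hb i hi]
      · rw [if_neg hi, if_neg hi]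
    have e20 : (V * U) 2 0 = (1 : MvPolynomial (Fin (n + 3)) K) := by
      rw [Matrix.mul_apply]
      simp only [hU, hV, Matrix.of_apply, Matrix.cons_val_zero, Matrix.cons_val_one,
          Matrix.head_cons, Matrix.cons_val_two, Matrix.cons_val_three, Matrix.tail_cons,
          mul_ite, mul_one, mul_zero, ite_mul, one_mul, zero_mul]
      first
      | simp [Finset.sum_ite_eq', h10, h10.symm, h20, h21]
      | (refine Finset.sum_eq_zero fun i _ => ?_
         rcases tri i with hi | hi | hi
         · subst hi; simp [h10.symm, h20]
         · subst hi; simp [h10, h21]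
         · have hi0 : i ≠ 0 := by intro h; rw [h, hv0] at hi; omega
           have hi1 : i ≠ 1 := by intro h; rw [h, hv1] at hi; omega
           simp [hi0, hi1, hi])
    have e21 : (V * U) 2 1 = (0 : MvPolynomial (Fin (n + 3)) K) := by
      rw [Matrix.mul_apply]
      simp only [hU, hV, Matrix.of_apply, Matrix.cons_val_zero, Matrix.cons_val_one,
          Matrix.head_cons, Matrix.cons_val_two, Matrix.cons_val_three, Matrix.tail_cons,
          mul_ite, mul_one, mul_zero, ite_mul, one_mul, zero_mul]
      first
      | simp [Finset.sum_ite_eq', h10, h10.symm, h20, h21]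
      | (refine Finset.sum_eq_zero fun i _ => ?_
         rcases tri i with hi | hi | hi
         · subst hi; simp [h10.symm, h20]
         · subst hi; simp [h10, h21]
         · have hi0 : i ≠ 0 := by intro h; rw [h, hv0] at hi; omega
           have hi1 : i ≠ 1 := by intro h; rw [h, hv1] at hi; omega
           simp [hi0, hi1, hi])
    have e22 : (V * U) 2 2 = (0 : MvPolynomial (Fin (n + 3)) K) := by
      rw [Matrix.mul_apply]
      simp only [hU, hV, Matrix.of_apply, Matrix.cons_val_zero, Matrix.cons_val_one,
          Matrix.head_cons, Matrix.cons_val_two, Matrix.cons_val_three, Matrix.tail_cons,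
          mul_ite, mul_one, mul_zero, ite_mul, one_mul, zero_mul]
      first
      | simp [Finset.sum_ite_eq', h10, h10.symm, h20, h21]
      | (refine Finset.sum_eq_zero fun i _ => ?_
         rcases tri i with hi | hi | hi
         · subst hi; simp [h10.symm, h20]
         · subst hi; simp [h10, h21]
         · have hi0 : i ≠ 0 := by intro h; rw [h, hv0] at hi; omega
           have hi1 : i ≠ 1 := by intro h; rw [h, hv1] at hi; omega
           simp [hi0, hi1, hi])
    have e23 : (V * U) 2 3 = (0 : MvPolynomial (Fin (n + 3)) K) := by
      rw [Matrix.mul_apply]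
      simp only [hU, hV, Matrix.of_apply, Matrix.cons_val_zero, Matrix.cons_val_one,
          Matrix.head_cons, Matrix.cons_val_two, Matrix.cons_val_three, Matrix.tail_cons,
          mul_ite, mul_one, mul_zero, ite_mul, one_mul, zero_mul]
      first
      | simp [Finset.sum_ite_eq', h10, h10.symm, h20, h21]
      | (refine Finset.sum_eq_zero fun i _ => ?_
         rcases tri i with hi | hi | hi
         · subst hi; simp [h10.symm, h20]
         · subst hi; simp [h10, h21]
         · have hi0 : i ≠ 0 := by intro h; rw [h, hv0] at hi; omega
           have hi1 : i ≠ 1 := by intro h; rw [h, hv1] at hi; omega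
           simp [hi0, hi1, hi])
    have e30 : (V * U) 3 0 = (0 : MvPolynomial (Fin (n + 3)) K) := by
      rw [Matrix.mul_apply]
      simp only [hU, hV, Matrix.of_apply, Matrix.cons_val_zero, Matrix.cons_val_one,
          Matrix.head_cons, Matrix.cons_val_two, Matrix.cons_val_three, Matrix.tail_cons,
          mul_ite, mul_one, mul_zero, ite_mul, one_mul, zero_mul]
      first
      | simp [Finset.sum_ite_eq', h10, h10.symm, h20, h21]
      | (refine Finset.sum_eq_zero fun i _ => ?_
         rcases tri i with hi | hi | hi
         · subst hi; simp [h10.symm, h20]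
         · subst hi; simp [h10, h21]
         · have hi0 : i ≠ 0 := by intro h; rw [h, hv0] at hi; omega
           have hi1 : i ≠ 1 := by intro h; rw [h, hv1] at hi; omega
           simp [hi0, hi1, hi])
    have e31 : (V * U) 3 1 = (1 : MvPolynomial (Fin (n + 3)) K) := by
      rw [Matrix.mul_apply]
      simp only [hU, hV, Matrix.of_apply, Matrix.cons_val_zero, Matrix.cons_val_one,
          Matrix.head_cons, Matrix.cons_val_two, Matrix.cons_val_three, Matrix.tail_cons,
          mul_ite, mul_one, mul_zero, ite_mul, one_mul, zero_mul]
      first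
      | simp [Finset.sum_ite_eq', h10, h10.symm, h20, h21]
      | (refine Finset.sum_eq_zero fun i _ => ?_
         rcases tri i with hi | hi | hi
         · subst hi; simp [h10.symm, h20]
         · subst hi; simp [h10, h21]
         · have hi0 : i ≠ 0 := by intro h; rw [h, hv0] at hi; omega
           have hi1 : i ≠ 1 := by intro h; rw [h, hv1] at hi; omega
           simp [hi0, hi1, hi])
    have e32 : (V * U) 3 2 = (0 : MvPolynomial (Fin (n + 3)) K) := by
      rw [Matrix.mul_apply]
      simp only [hU, hV, Matrix.of_apply, Matrix.cons_val_zero, Matrix.cons_val_one,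
          Matrix.head_cons, Matrix.cons_val_two, Matrix.cons_val_three, Matrix.tail_cons,
          mul_ite, mul_one, mul_zero, ite_mul, one_mul, zero_mul]
      first
      | simp [Finset.sum_ite_eq', h10, h10.symm, h20, h21]
      | (refine Finset.sum_eq_zero fun i _ => ?_
         rcases tri i with hi | hi | hi
         · subst hi; simp [h10.symm, h20]
         · subst hi; simp [h10, h21]
         · have hi0 : i ≠ 0 := by intro h; rw [h, hv0] at hi; omega
           have hi1 : i ≠ 1 := by intro h; rw [h, hv1] at hi; omega
           simp [hi0, hi1, hi])
    have e33 : (V * U) 3 3 = (0 : MvPolynomial (Fin (n + 3)) K) := by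
      rw [Matrix.mul_apply]
      simp only [hU, hV, Matrix.of_apply, Matrix.cons_val_zero, Matrix.cons_val_one,
          Matrix.head_cons, Matrix.cons_val_two, Matrix.cons_val_three, Matrix.tail_cons,
          mul_ite, mul_one, mul_zero, ite_mul, one_mul, zero_mul]
      first
      | simp [Finset.sum_ite_eq', h10, h10.symm, h20, h21]
      | (refine Finset.sum_eq_zero fun i _ => ?_
         rcases tri i with hi | hi | hi
         · subst hi; simp [h10.symm, h20]
         · subst hi; simp [h10, h21]
         · have hi0 : i ≠ 0 := by intro h; rw [h, hv0] at hi; omega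
           have hi1 : i ≠ 1 := by intro h; rw [h, hv1] at hi; omega
           simp [hi0, hi1, hi])
    refine Matrix.ext fun k l => ?_
    fin_cases k <;> fin_cases l
    · exact e00
    · exact e01
    · exact e02
    · exact e03
    · exact e10
    · exact e11
    · exact e12
    · exact e13
    · exact e20
    · exact e21
    · exact e22
    · exact e23
    · exact e30
    · exact e31
    · exact e32
    · exact e33
  -- nilpotency of the condensed matrix
  obtain ⟨m, hm⟩ := hnil
  have hnilM : IsNilpotent (V * U) := by
    refine ⟨m + 1, ?_⟩
    rw [stmt9_mulVecPow, ← hA, hm, Matrix.mul_zero, Matrix.zero_mul]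
  rw [hMeq] at hnilM
  obtain ⟨k1, k2, k3, k4⟩ := stmt9_key _ _ _ _ _ _ _ _ hnilM
  refine ⟨k1, k2, ?_, ?_⟩
  · have hsum3 : ∑ i ∈ F, pderiv i (H 0) * (pderiv 0 (H 1) * pderiv 1 (H i)
        - pderiv 1 (H 1) * pderiv 0 (H i))
        = pderiv 0 (H 1) * (∑ i ∈ F, pderiv i (H 0) * pderiv 1 (H i))
          - pderiv 1 (H 1) * (∑ i ∈ F, pderiv i (H 0) * pderiv 0 (H i)) := by
      rw [Finset.mul_sum, Finset.mul_sum, ← Finset.sum_sub_distrib]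
      exact Finset.sum_congr rfl fun i _ => by ring
    rw [hsum3]
    linear_combination k3
  · have hsum4 : ∑ i ∈ F, pderiv i (H 0) * (pderiv 0 (H i) * pderiv 1 h2
        - pderiv 1 (H i) * pderiv 0 h2)
        = (∑ i ∈ F, pderiv i (H 0) * pderiv 0 (H i)) * pderiv 1 h2
          - (∑ i ∈ F, pderiv i (H 0) * pderiv 1 (H i)) * pderiv 0 h2 := by
      rw [Finset.sum_mul, Finset.sum_mul, ← Finset.sum_sub_distrib]
      exact Finset.sum_congr rfl fun i _ => by ring
    rw [hsum4]
    linear_combination k4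
end

section
/- Let K be a field of characteristic zero and let h̃ = (z + h̃_1(x,y), w + h̃_2(x,y), h̃_3(x,y), h̃_4(x,y)) be a polynomial map in the four variables x, y, z, w, where h̃_1, h̃_2, h̃_3, h̃_4 ∈ K[x,y]. If the Jacobian matrix Jh̃ is nilpotent and the components of h̃ are linearly dependent over K, then there exist T ∈ GL_4(K) and g_1, g_2, g_3 ∈ K[x,y] such that T^{-1} ∘ h̃ ∘ T = (z + g_1(x,y), w + g_2(x,y), g_3(x,y), 0). -/
open MvPolynomial

/-- The conjugate `T⁻¹ ∘ H ∘ T` of a polynomial map `H` by an invertible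
linear map `T ∈ GL_n(K)`, i.e. the polynomial map `x ↦ T⁻¹ · H(T · x)`. -/
noncomputable def conjMap {n : ℕ} {K : Type*} [Field K]
    (T : Matrix.GeneralLinearGroup (Fin n) K)
    (H : Fin n → MvPolynomial (Fin n) K) : Fin n → MvPolynomial (Fin n) K :=
  fun i => ∑ j, C ((↑(T⁻¹) : Matrix (Fin n) (Fin n) K) i j) *
    aeval (fun k => ∑ m, C ((↑T : Matrix (Fin n) (Fin n) K) k m) * X m) (H j)

section Aux
variable {K : Type*} [Field K]

private lemma deg0_iff (i : Fin 4) (p : MvPolynomial (Fin 4) K) :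
    degreeOf i p = 0 ↔ ∀ m ∈ p.support, m i = 0 := by
  rw [← Nat.le_zero, degreeOf_le_iff]
  simp [Nat.le_zero]

private lemma coeff_eq_zero_of_deg0 {i : Fin 4} {p : MvPolynomial (Fin 4) K}
    (h : degreeOf i p = 0) {m : Fin 4 →₀ ℕ} (hm : m i ≠ 0) : coeff m p = 0 := by
  by_contra hc
  exact hm ((deg0_iff i p).mp h m (mem_support_iff.mpr hc))

private lemma mem_supported_of_deg0 {p : MvPolynomial (Fin 4) K}
    (h2 : degreeOf 2 p = 0) (h3 : degreeOf 3 p = 0) :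
    p ∈ supported K ({0, 1} : Set (Fin 4)) := by
  rw [mem_supported]
  intro i hi
  obtain ⟨d, hd, hdi⟩ := (mem_vars i).mp hi
  rw [deg0_iff] at h2 h3
  fin_cases i
  · exact Or.inl rfl
  · exact Or.inr rfl
  · exact absurd (h2 d hd) (Finsupp.mem_support_iff.mp hdi)
  · exact absurd (h3 d hd) (Finsupp.mem_support_iff.mp hdi)

private lemma deg0_of_mem_supported {p : MvPolynomial (Fin 4) K}
    (hp : p ∈ supported K ({0, 1} : Set (Fin 4))) :
    degreeOf 2 p = 0 ∧ degreeOf 3 p = 0 := by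
  rw [mem_supported] at hp
  constructor <;>
  · rw [deg0_iff]
    intro m hm
    by_contra hmi
    have := hp (mem_vars _ |>.mpr ⟨m, hm, Finsupp.mem_support_iff.mpr hmi⟩)
    simp at this

private lemma aeval_mem_supported (φ : Fin 4 → MvPolynomial (Fin 4) K)
    (h0 : φ 0 ∈ supported K ({0, 1} : Set (Fin 4)))
    (h1 : φ 1 ∈ supported K ({0, 1} : Set (Fin 4)))
    {p : MvPolynomial (Fin 4) K} (hp : p ∈ supported K ({0, 1} : Set (Fin 4))) :
    aeval φ p ∈ supported K ({0, 1} : Set (Fin 4)) := by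
  rw [supported] at hp
  induction hp using Algebra.adjoin_induction with
  | mem x hx =>
      obtain ⟨i, hi, rfl⟩ := hx
      rcases hi with rfl | rfl
      · simpa using h0
      · simpa using h1
  | algebraMap r => simpa using Subalgebra.algebraMap_mem (supported K ({0, 1} : Set (Fin 4))) r
  | add x y _ _ hx hy => rw [map_add]; exact add_mem hx hy
  | mul x y _ _ hx hy => rw [map_mul]; exact mul_mem hx hy

end Aux

set_option maxHeartbeats 1600000 in
/-- (Theorem 4.1.)  Variables `x = X 0`, `y = X 1`,
`z = X 2`, `w = X 3`.  Let `h̃ = (z + h̃₁(x,y), w + h̃₂(x,y), h̃₃(x,y), h̃₄(x,y))`.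
If `Jh̃` is nilpotent and the components of `h̃` are linearly dependent over
`K`, then there are `T ∈ GL_4(K)` and `g₁, g₂, g₃ ∈ K[x,y]` with
`T⁻¹ ∘ h̃ ∘ T = (z + g₁(x,y), w + g₂(x,y), g₃(x,y), 0)`. -/
theorem stmt13 (K : Type*) [Field K] [CharZero K]
    (h₁ h₂ h₃ h₄ : MvPolynomial (Fin 4) K)
    (hxy : ∀ p ∈ [h₁, h₂, h₃, h₄], degreeOf 2 p = 0 ∧ degreeOf 3 p = 0)
    (hnil : IsNilpotent (jacobian ![X 2 + h₁, X 3 + h₂, h₃, h₄]))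
    (hdep : ¬ LinearIndependent K ![X 2 + h₁, X 3 + h₂, h₃, h₄]) :
    ∃ (T : Matrix.GeneralLinearGroup (Fin 4) K)
      (g₁ g₂ g₃ : MvPolynomial (Fin 4) K),
      (∀ p ∈ [g₁, g₂, g₃], degreeOf 2 p = 0 ∧ degreeOf 3 p = 0) ∧
      conjMap T ![X 2 + h₁, X 3 + h₂, h₃, h₄] = ![X 2 + g₁, X 3 + g₂, g₃, 0] := by
  obtain ⟨h₁2, h₁3⟩ := hxy h₁ (by simp)
  obtain ⟨h₂2, h₂3⟩ := hxy h₂ (by simp)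
  obtain ⟨h₃2, h₃3⟩ := hxy h₃ (by simp)
  obtain ⟨h₄2, h₄3⟩ := hxy h₄ (by simp)
  have hs₁ := mem_supported_of_deg0 h₁2 h₁3
  have hs₂ := mem_supported_of_deg0 h₂2 h₂3
  have hs₃ := mem_supported_of_deg0 h₃2 h₃3
  have hs₄ := mem_supported_of_deg0 h₄2 h₄3
  rw [Fintype.not_linearIndependent_iff] at hdep
  obtain ⟨g, hg, i, hgi⟩ := hdep
  -- the coefficients on the first two components vanish
  have hg0 : g 0 = 0 := by
    have := congrArg (coeff (Finsupp.single 2 1)) hg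
    simpa [Fin.sum_univ_four, coeff_smul, coeff_X', Finsupp.single_eq_single_iff,
      coeff_eq_zero_of_deg0 h₁2 (m := Finsupp.single 2 1) (by simp),
      coeff_eq_zero_of_deg0 h₂2 (m := Finsupp.single 2 1) (by simp),
      coeff_eq_zero_of_deg0 h₃2 (m := Finsupp.single 2 1) (by simp),
      coeff_eq_zero_of_deg0 h₄2 (m := Finsupp.single 2 1) (by simp)] using this
  have hg1 : g 1 = 0 := by
    have := congrArg (coeff (Finsupp.single 3 1)) hg
    simpa [Fin.sum_univ_four, coeff_smul, coeff_X', Finsupp.single_eq_single_iff,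
      coeff_eq_zero_of_deg0 h₁3 (m := Finsupp.single 3 1) (by simp),
      coeff_eq_zero_of_deg0 h₂3 (m := Finsupp.single 3 1) (by simp),
      coeff_eq_zero_of_deg0 h₃3 (m := Finsupp.single 3 1) (by simp),
      coeff_eq_zero_of_deg0 h₄3 (m := Finsupp.single 3 1) (by simp)] using this
  have hrel : C (g 2) * h₃ + C (g 3) * h₄ = 0 := by
    simpa [Fin.sum_univ_four, hg0, hg1, smul_eq_C_mul] using hg
  by_cases hg3 : g 3 = 0
  · -- then h₃ = 0 ; swap the pairs of coordinates
    have hg2 : g 2 ≠ 0 := by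
      fin_cases i <;> simp_all
    have hh3 : h₃ = 0 := by
      rw [hg3, map_zero, zero_mul, add_zero] at hrel
      rcases mul_eq_zero.mp hrel with h | h
      · exact absurd (by simpa using h) hg2
      · exact h
    have hAB : (!![0,1,0,0; 1,0,0,0; 0,0,0,1; 0,0,1,0] : Matrix (Fin 4) (Fin 4) K) *
        !![0,1,0,0; 1,0,0,0; 0,0,0,1; 0,0,1,0] = 1 := by
      ext i j
      fin_cases i <;> fin_cases j <;>
        simp [Matrix.mul_apply, Fin.sum_univ_four, Matrix.one_apply,
          Matrix.vecHead, Matrix.vecTail]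
    have hφeq : (fun k : Fin 4 => ∑ m : Fin 4,
        C ((!![0,1,0,0; 1,0,0,0; 0,0,0,1; 0,0,1,0] : Matrix (Fin 4) (Fin 4) K) k m) * X m) =
        (![X 1, X 0, X 3, X 2] : Fin 4 → MvPolynomial (Fin 4) K) := by
      funext k
      fin_cases k <;> simp [Fin.sum_univ_four, Matrix.vecHead, Matrix.vecTail]
    set φ : Fin 4 → MvPolynomial (Fin 4) K := ![X 1, X 0, X 3, X 2] with hφdef
    have hφ0 : φ 0 ∈ supported K ({0, 1} : Set (Fin 4)) := by
      simp only [hφdef, Matrix.cons_val_zero]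
      exact X_mem_supported.mpr (by simp)
    have hφ1 : φ 1 ∈ supported K ({0, 1} : Set (Fin 4)) := by
      simp only [hφdef, Matrix.cons_val_one, Matrix.head_cons]
      exact X_mem_supported.mpr (by simp)
    refine ⟨⟨_, _, hAB, hAB⟩, aeval φ h₂, aeval φ h₁, aeval φ h₄, ?_, ?_⟩
    · intro p hp
      simp only [List.mem_cons, List.not_mem_nil, or_false] at hp
      rcases hp with rfl | rfl | rfl
      · exact deg0_of_mem_supported (aeval_mem_supported φ hφ0 hφ1 hs₂)
      · exact deg0_of_mem_supported (aeval_mem_supported φ hφ0 hφ1 hs₁)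
      · exact deg0_of_mem_supported (aeval_mem_supported φ hφ0 hφ1 hs₄)
    · have key : conjMap (⟨_, _, hAB, hAB⟩ : Matrix.GeneralLinearGroup (Fin 4) K)
          ![X 2 + h₁, X 3 + h₂, h₃, h₄] =
          fun i => ∑ j : Fin 4,
            C ((!![0,1,0,0; 1,0,0,0; 0,0,0,1; 0,0,1,0] : Matrix (Fin 4) (Fin 4) K) i j) *
            aeval (fun k : Fin 4 => ∑ m : Fin 4,
              C ((!![0,1,0,0; 1,0,0,0; 0,0,0,1; 0,0,1,0] : Matrix (Fin 4) (Fin 4) K) k m) * X m)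
              (![X 2 + h₁, X 3 + h₂, h₃, h₄] j) := rfl
      rw [key, hφeq]
      funext j
      fin_cases j <;>
        simp [hφdef, Fin.sum_univ_four, Matrix.vecHead, Matrix.vecTail, hh3, map_add, aeval_X]
  · -- then h₄ = C l * h₃ with l = -(g 2)/(g 3)
    set l : K := -(g 2) / (g 3) with hl
    have hlg : l * g 3 = -(g 2) := div_mul_cancel₀ _ hg3
    have hC3 : (C (g 3) : MvPolynomial (Fin 4) K) ≠ 0 := by
      simpa using hg3
    have hh4 : h₄ = C l * h₃ := by
      apply mul_left_cancel₀ hC3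
      have h4eq : C (g 3) * h₄ = -(C (g 2) * h₃) := eq_neg_of_add_eq_zero_right hrel
      rw [h4eq, ← mul_assoc, ← map_mul, mul_comm (g 3) l, hlg, map_neg, neg_mul]
    have hAB : (!![1,0,0,0; l,1,0,0; 0,0,1,0; 0,0,l,1] : Matrix (Fin 4) (Fin 4) K) *
        !![1,0,0,0; -l,1,0,0; 0,0,1,0; 0,0,-l,1] = 1 := by
      ext i j
      fin_cases i <;> fin_cases j <;>
        simp [Matrix.mul_apply, Fin.sum_univ_four, Matrix.one_apply,
          Matrix.vecHead, Matrix.vecTail]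
    have hBA : (!![1,0,0,0; -l,1,0,0; 0,0,1,0; 0,0,-l,1] : Matrix (Fin 4) (Fin 4) K) *
        !![1,0,0,0; l,1,0,0; 0,0,1,0; 0,0,l,1] = 1 := by
      ext i j
      fin_cases i <;> fin_cases j <;>
        simp [Matrix.mul_apply, Fin.sum_univ_four, Matrix.one_apply,
          Matrix.vecHead, Matrix.vecTail]
    have hφeq : (fun k : Fin 4 => ∑ m : Fin 4,
        C ((!![1,0,0,0; l,1,0,0; 0,0,1,0; 0,0,l,1] : Matrix (Fin 4) (Fin 4) K) k m) * X m) =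
        (![X 0, C l * X 0 + X 1, X 2, C l * X 2 + X 3] : Fin 4 → MvPolynomial (Fin 4) K) := by
      funext k
      fin_cases k <;> simp [Fin.sum_univ_four, Matrix.vecHead, Matrix.vecTail]
    set φ : Fin 4 → MvPolynomial (Fin 4) K := ![X 0, C l * X 0 + X 1, X 2, C l * X 2 + X 3]
      with hφdef
    have hφ0 : φ 0 ∈ supported K ({0, 1} : Set (Fin 4)) := by
      simp only [hφdef, Matrix.cons_val_zero]
      exact X_mem_supported.mpr (by simp)
    have hφ1 : φ 1 ∈ supported K ({0, 1} : Set (Fin 4)) := by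
      simp only [hφdef, Matrix.cons_val_one, Matrix.head_cons]
      refine add_mem (mul_mem ?_ (X_mem_supported.mpr (by simp)))
        (X_mem_supported.mpr (by simp))
      simpa [algebraMap_eq] using Subalgebra.algebraMap_mem
        (supported K ({0, 1} : Set (Fin 4))) l
    have haux := fun (p : MvPolynomial (Fin 4) K)
        (hp : p ∈ supported K ({0, 1} : Set (Fin 4))) =>
      aeval_mem_supported φ hφ0 hφ1 hp
    refine ⟨⟨_, _, hAB, hBA⟩, aeval φ h₁, aeval φ h₂ - C l * aeval φ h₁, aeval φ h₃, ?_, ?_⟩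
    · intro p hp
      simp only [List.mem_cons, List.not_mem_nil, or_false] at hp
      rcases hp with rfl | rfl | rfl
      · exact deg0_of_mem_supported (haux h₁ hs₁)
      · refine deg0_of_mem_supported (sub_mem (haux h₂ hs₂) (mul_mem ?_ (haux h₁ hs₁)))
        simpa [algebraMap_eq] using Subalgebra.algebraMap_mem
          (supported K ({0, 1} : Set (Fin 4))) l
      · exact deg0_of_mem_supported (haux h₃ hs₃)
    · have key : conjMap (⟨_, _, hAB, hBA⟩ : Matrix.GeneralLinearGroup (Fin 4) K)
          ![X 2 + h₁, X 3 + h₂, h₃, h₄] =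
          fun i => ∑ j : Fin 4,
            C ((!![1,0,0,0; -l,1,0,0; 0,0,1,0; 0,0,-l,1] : Matrix (Fin 4) (Fin 4) K) i j) *
            aeval (fun k : Fin 4 => ∑ m : Fin 4,
              C ((!![1,0,0,0; l,1,0,0; 0,0,1,0; 0,0,l,1] : Matrix (Fin 4) (Fin 4) K) k m) * X m)
              (![X 2 + h₁, X 3 + h₂, h₃, h₄] j) := rfl
      rw [key, hφeq]
      funext j
      fin_cases j <;>
        simp [hφdef, Fin.sum_univ_four, Matrix.vecHead, Matrix.vecTail, hh4, map_add, aeval_X] <;>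
        ring
end

section
/- Let K be a field of characteristic zero and let h̃ = (z + h̃_1(x,y), w + h̃_2(x,y), h̃_3(x,y), h̃_4(x,y)) be a polynomial map in the four variables x, y, z, w, where h̃_1, h̃_2, h̃_3, h̃_4 ∈ K[x,y]. If the Jacobian matrix Jh̃ is nilpotent, then the two-dimensional polynomial map over the ring K[t] given by ( x + t·h̃_1(x,y) − t²·h̃_3(x,y), y + t·h̃_2(x,y) − t²·h̃_4(x,y) ) is a Keller map, i.e., the determinant of its 2×2 Jacobian matrix with respect to the variables x and y equals 1. -/
open MvPolynomial

lemma aux_pderiv_zero_of_degreeOf {K : Type*} [CommSemiring K] {σ : Type*}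
    {i : σ} {p : MvPolynomial σ K} (h : degreeOf i p = 0) : pderiv i p = 0 := by
  classical
  apply pderiv_eq_zero_of_notMem_vars
  rw [vars_def, Multiset.mem_toFinset]
  rw [degreeOf_def] at h
  exact Multiset.count_eq_zero.mp h

lemma aux_pderiv_aeval {K A σ τ : Type*} [CommSemiring K] [CommSemiring A] [Algebra K A]
    (f : σ → MvPolynomial τ A) (j : σ) (j' : τ)
    (hf : ∀ i : σ, pderiv j' (f i) = aeval f (pderiv j (X i : MvPolynomial σ K)))
    (p : MvPolynomial σ K) :
    pderiv j' (aeval f p) = aeval f (pderiv j p) := by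
  induction p using MvPolynomial.induction_on with
  | C a =>
      rw [aeval_C, IsScalarTower.algebraMap_apply K A (MvPolynomial τ A),
        MvPolynomial.algebraMap_eq]
      simp [pderiv_C]
  | add p q hp hq => simp [hp, hq]
  | mul_X p i hp =>
      rw [map_mul, aeval_X, pderiv_mul, hp, hf, Derivation.leibniz, smul_eq_mul, smul_eq_mul,
        map_add, map_mul, map_mul, aeval_X]
      ring

set_option maxHeartbeats 1000000 in
/-- Variables `x = X 0`, `y = X 1`, `z = X 2`, `w = X 3`.
Let `h̃ = (z + h̃₁(x,y), w + h̃₂(x,y), h̃₃(x,y), h̃₄(x,y))` have nilpotent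
Jacobian.  Then the two-dimensional polynomial map over `K[t]` given by
`(x + t·h̃₁(x,y) − t²·h̃₃(x,y), y + t·h̃₂(x,y) − t²·h̃₄(x,y))` is a Keller map:
the determinant of its Jacobian matrix with respect to `x, y` equals `1`.
Here polynomials in `x, y` over `K[t]` are elements of
`MvPolynomial (Fin 2) (Polynomial K)` (with `x = X 0`, `y = X 1`,
`t = C Polynomial.X`), and `h̃ᵢ(x,y)` is transported into this ring via the
substitution `(x, y, z, w) ↦ (x, y, 0, 0)`. -/
theorem stmt14 (K : Type*) [Field K] [CharZero K]
    (h₁ h₂ h₃ h₄ : MvPolynomial (Fin 4) K)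
    (hxy : ∀ p ∈ [h₁, h₂, h₃, h₄], degreeOf 2 p = 0 ∧ degreeOf 3 p = 0)
    (hnil : IsNilpotent (jacobian ![X 2 + h₁, X 3 + h₂, h₃, h₄])) :
    ∀ F₁ F₂ : MvPolynomial (Fin 2) (Polynomial K),
      F₁ = X 0 + C Polynomial.X *
            aeval (R := K) ![X 0, X 1, 0, 0] h₁
          - C Polynomial.X ^ 2 * aeval (R := K) ![X 0, X 1, 0, 0] h₃ →
      F₂ = X 1 + C Polynomial.X *
            aeval (R := K) ![X 0, X 1, 0, 0] h₂
          - C Polynomial.X ^ 2 * aeval (R := K) ![X 0, X 1, 0, 0] h₄ →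
      Matrix.det !![pderiv 0 F₁, pderiv 1 F₁; pderiv 0 F₂, pderiv 1 F₂] = 1 := by
  intro F₁ F₂ hF₁ hF₂
  -- names for the partial derivatives
  obtain ⟨a1, ha1⟩ : ∃ a, a = pderiv (0 : Fin 4) h₁ := ⟨_, rfl⟩
  obtain ⟨a2, ha2⟩ : ∃ a, a = pderiv (0 : Fin 4) h₂ := ⟨_, rfl⟩
  obtain ⟨a3, ha3⟩ : ∃ a, a = pderiv (0 : Fin 4) h₃ := ⟨_, rfl⟩
  obtain ⟨a4, ha4⟩ : ∃ a, a = pderiv (0 : Fin 4) h₄ := ⟨_, rfl⟩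
  obtain ⟨b1, hb1⟩ : ∃ a, a = pderiv (1 : Fin 4) h₁ := ⟨_, rfl⟩
  obtain ⟨b2, hb2⟩ : ∃ a, a = pderiv (1 : Fin 4) h₂ := ⟨_, rfl⟩
  obtain ⟨b3, hb3⟩ : ∃ a, a = pderiv (1 : Fin 4) h₃ := ⟨_, rfl⟩
  obtain ⟨b4, hb4⟩ : ∃ a, a = pderiv (1 : Fin 4) h₄ := ⟨_, rfl⟩
  obtain ⟨hz1, hw1⟩ := hxy h₁ (by simp)
  obtain ⟨hz2, hw2⟩ := hxy h₂ (by simp)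
  obtain ⟨hz3, hw3⟩ := hxy h₃ (by simp)
  obtain ⟨hz4, hw4⟩ := hxy h₄ (by simp)
  have dz1 := aux_pderiv_zero_of_degreeOf hz1
  have dz2 := aux_pderiv_zero_of_degreeOf hz2
  have dz3 := aux_pderiv_zero_of_degreeOf hz3
  have dz4 := aux_pderiv_zero_of_degreeOf hz4
  have dw1 := aux_pderiv_zero_of_degreeOf hw1
  have dw2 := aux_pderiv_zero_of_degreeOf hw2
  have dw3 := aux_pderiv_zero_of_degreeOf hw3
  have dw4 := aux_pderiv_zero_of_degreeOf hw4
  obtain ⟨M, hM⟩ : ∃ M : Matrix (Fin 4) (Fin 4) (MvPolynomial (Fin 4) K),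
    M = !![a1, b1, 1, 0; a2, b2, 0, 1; a3, b3, 0, 0; a4, b4, 0, 0] := ⟨_, rfl⟩
  have hJ : jacobian ![X 2 + h₁, X 3 + h₂, h₃, h₄] = M := by
    refine Matrix.ext fun i j => ?_
    fin_cases i <;> fin_cases j <;>
      simp [jacobian, hM, dz1, dz2, dz3, dz4, dw1, dw2, dw3, dw4,
        hM, ha1, ha2, ha3, ha4, hb1, hb2, hb3, hb4, Matrix.vecHead, Matrix.vecTail, Function.comp]
  rw [hJ] at hnil
  have hM2 : M * M = !![a1^2 + a2*b1 + a3, a1*b1 + b1*b2 + b3, a1, b1;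
      a1*a2 + a2*b2 + a4, a2*b1 + b2^2 + b4, a2, b2;
      a1*a3 + a2*b3, a3*b1 + b2*b3, a3, b3;
      a1*a4 + a2*b4, a4*b1 + b2*b4, a4, b4] := by
    refine Matrix.ext fun i j => ?_
    fin_cases i <;> fin_cases j <;>
      simp [hM, Matrix.mul_apply, Fin.sum_univ_four, Matrix.vecHead, Matrix.vecTail] <;> ring
  have hp1 := (Matrix.isNilpotent_trace_of_isNilpotent hnil).eq_zero
  have hp2 := (Matrix.isNilpotent_trace_of_isNilpotent
    (IsNilpotent.pow_succ 1 hnil)).eq_zero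
  have hp3 := (Matrix.isNilpotent_trace_of_isNilpotent
    (IsNilpotent.pow_succ 2 hnil)).eq_zero
  have hp4 := (Matrix.isNilpotent_trace_of_isNilpotent
    (IsNilpotent.pow_succ 3 hnil)).eq_zero
  rw [pow_two, hM2] at hp2
  have h3eq : M ^ (2 + 1) = M ^ 2 * M := pow_succ M 2
  have h4eq : M ^ (3 + 1) = M ^ 2 * M ^ 2 := by
    rw [← pow_add]
  rw [h3eq, pow_two, hM2] at hp3
  rw [h4eq, pow_two, hM2] at hp4
  simp only [hM, Matrix.trace, Matrix.diag, Fin.sum_univ_four, Matrix.mul_apply,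
    Matrix.cons_val', Matrix.cons_val_zero, Matrix.cons_val_one, Matrix.head_cons,
    Matrix.empty_val', Matrix.cons_val_fin_one, Matrix.head_fin_const,
    Matrix.cons_val_two, Matrix.cons_val_three, Matrix.tail_cons, Matrix.of_apply] at hp1 hp2 hp3 hp4
  -- the four coefficient identities in the 4-variable ring
  have hq1 : a1 + b2 = 0 := by linear_combination hp1
  have hq2 : a1 * b2 - a2 * b1 - a3 - b4 = 0 := by
    have h2 : (2 : MvPolynomial (Fin 4) K) * (a1 * b2 - a2 * b1 - a3 - b4) = 0 := by
      linear_combination (a1 + b2) * hp1 - hp2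
    rcases mul_eq_zero.mp h2 with h | h
    · exact absurd h (by norm_num)
    · exact h
  have hq3 : a2 * b3 - a3 * b2 + a4 * b1 - a1 * b4 = 0 := by
    have h3 : (3 : MvPolynomial (Fin 4) K) * (a2 * b3 - a3 * b2 + a4 * b1 - a1 * b4) = 0 := by
      linear_combination hp3 - (a1 + b2) * hp2 + (a1 + b2) * hq2
    rcases mul_eq_zero.mp h3 with h | h
    · exact absurd h (by norm_num)
    · exact h
  have hq4 : a3 * b4 - a4 * b3 = 0 := by
    have h4 : (4 : MvPolynomial (Fin 4) K) * (a3 * b4 - a4 * b3) = 0 := by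
      linear_combination (a1 + b2) * hp3 - (a1 * b2 - a2 * b1 - a3 - b4) * hp2
        + (a1 + b2) * hq3 - hp4
    rcases mul_eq_zero.mp h4 with h | h
    · exact absurd h (by norm_num)
    · exact h
  -- transport to the 2-variable ring over K[t]
  have hf : True := trivial
  have key0 : ∀ p : MvPolynomial (Fin 4) K,
      pderiv (0 : Fin 2) (aeval (R := K) (![X 0, X 1, 0, 0] : Fin 4 → MvPolynomial (Fin 2) (Polynomial K)) p) = aeval (R := K) ![X 0, X 1, 0, 0] (pderiv (0 : Fin 4) p) := by
    intro p
    refine aux_pderiv_aeval _ 0 0 ?_ p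
    intro i; fin_cases i <;> simp [Matrix.vecHead, Matrix.vecTail]
  have key1 : ∀ p : MvPolynomial (Fin 4) K,
      pderiv (1 : Fin 2) (aeval (R := K) (![X 0, X 1, 0, 0] : Fin 4 → MvPolynomial (Fin 2) (Polynomial K)) p) = aeval (R := K) ![X 0, X 1, 0, 0] (pderiv (1 : Fin 4) p) := by
    intro p
    refine aux_pderiv_aeval _ 1 1 ?_ p
    intro i; fin_cases i <;> simp [Matrix.vecHead, Matrix.vecTail]
  have m1 := congrArg (aeval (R := K) (![X 0, X 1, 0, 0] : Fin 4 → MvPolynomial (Fin 2) (Polynomial K))) hq1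
  have m2 := congrArg (aeval (R := K) (![X 0, X 1, 0, 0] : Fin 4 → MvPolynomial (Fin 2) (Polynomial K))) hq2
  have m3 := congrArg (aeval (R := K) (![X 0, X 1, 0, 0] : Fin 4 → MvPolynomial (Fin 2) (Polynomial K))) hq3
  have m4 := congrArg (aeval (R := K) (![X 0, X 1, 0, 0] : Fin 4 → MvPolynomial (Fin 2) (Polynomial K))) hq4
  simp only [map_add, map_sub, map_mul, map_zero] at m1 m2 m3 m4
  subst hF₁ hF₂
  rw [Matrix.det_fin_two_of]
  rw [← map_pow]
  simp only [map_sub, map_add, pderiv_C_mul, key0, key1, pderiv_X_self,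
    pderiv_X_of_ne (show (0 : Fin 2) ≠ 1 by decide),
    pderiv_X_of_ne (show (1 : Fin 2) ≠ 0 by decide),
    ← ha1, ← ha2, ← ha3, ← ha4, ← hb1, ← hb2, ← hb3, ← hb4]
  rw [map_pow]
  linear_combination (C Polynomial.X : MvPolynomial (Fin 2) (Polynomial K)) * m1
    + (C Polynomial.X : MvPolynomial (Fin 2) (Polynomial K)) ^ 2 * m2
    + (C Polynomial.X : MvPolynomial (Fin 2) (Polynomial K)) ^ 3 * m3
    + (C Polynomial.X : MvPolynomial (Fin 2) (Polynomial K)) ^ 4 * m4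
end
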